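/- If f is quasi-homogeneous with weights q_1, ..., q_n ∈ (0, 1/2] (i.e. f(λ^{q_1}z_1, ..., λ^{q_n}z_n) = λ f(z)) and has an isolated singularity at 0, then the dimension of its Milnor ring equals μ = ∏_{i=1}^n (1/q_i − 1). Verify this for f(x,y) = x^p + y^q: the Milnor ring k[x,y]/(x^{p-1}, y^{q-1}) has dimension (p−1)(q−1). -/

import Mathlib

open MvPolynomial Polynomial TensorProduct

lemma milnor_aux (k : Type*) [Field k] (a b : ℕ) (ha : a ≠ 0) (hb : b ≠ 0) :
    Module.finrank k (MvPolynomial (Fin 2) k ⧸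
      Ideal.span {(X 0 : MvPolynomial (Fin 2) k) ^ a, X 1 ^ b}) = a * b := by
  set I : Ideal (MvPolynomial (Fin 2) k) :=
    Ideal.span {(X 0 : MvPolynomial (Fin 2) k) ^ a, X 1 ^ b} with hIdef
  set A := AdjoinRoot (Polynomial.X ^ a : Polynomial k) with hA
  set B := AdjoinRoot (Polynomial.X ^ b : Polynomial k) with hB
  have hrootA : (AdjoinRoot.root (Polynomial.X ^ a : Polynomial k)) ^ a = 0 := by
    rw [← AdjoinRoot.mk_X, ← map_pow, AdjoinRoot.mk_self]
  have hrootB : (AdjoinRoot.root (Polynomial.X ^ b : Polynomial k)) ^ b = 0 := by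
    rw [← AdjoinRoot.mk_X, ← map_pow, AdjoinRoot.mk_self]
  -- forward map
  let v : Fin 2 → A ⊗[k] B :=
    ![(AdjoinRoot.root _) ⊗ₜ 1, 1 ⊗ₜ (AdjoinRoot.root _)]
  let φ : MvPolynomial (Fin 2) k →ₐ[k] A ⊗[k] B := MvPolynomial.aeval v
  have hX0 : X 0 ^ a ∈ I := Ideal.subset_span (Or.inl rfl)
  have hX1 : X 1 ^ b ∈ I := Ideal.subset_span (Or.inr rfl)
  have hker : I ≤ RingHom.ker φ := by
    rw [hIdef, Ideal.span_le]
    rintro x (rfl | rfl)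
    · simp only [SetLike.mem_coe, RingHom.mem_ker, map_pow, φ, MvPolynomial.aeval_X, v,
        Matrix.cons_val_zero]
      rw [Algebra.TensorProduct.tmul_pow, hrootA, TensorProduct.zero_tmul]
    · simp only [Set.mem_singleton_iff, SetLike.mem_coe, RingHom.mem_ker, map_pow, φ,
        MvPolynomial.aeval_X, v, Matrix.cons_val_one, Matrix.head_cons, Matrix.cons_val_zero]
      rw [Algebra.TensorProduct.tmul_pow, hrootB, TensorProduct.tmul_zero]
  let φ' : (MvPolynomial (Fin 2) k ⧸ I) →ₐ[k] A ⊗[k] B :=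
    Ideal.Quotient.liftₐ I φ (fun x hx => RingHom.mem_ker.mp (hker hx))
  have hfA : Polynomial.aeval (Ideal.Quotient.mk I (X 0)) (Polynomial.X ^ a : Polynomial k) = 0 := by
    rw [map_pow, Polynomial.aeval_X, ← map_pow, Ideal.Quotient.eq_zero_iff_mem]
    exact hX0
  have hfB : Polynomial.aeval (Ideal.Quotient.mk I (X 1)) (Polynomial.X ^ b : Polynomial k) = 0 := by
    rw [map_pow, Polynomial.aeval_X, ← map_pow, Ideal.Quotient.eq_zero_iff_mem]
    exact hX1
  let ψ : A ⊗[k] B →ₐ[k] (MvPolynomial (Fin 2) k ⧸ I) :=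
    Algebra.TensorProduct.productMap
      (AdjoinRoot.liftAlgHom _ (Algebra.ofId _ _) _ (by rw [Algebra.toRingHom_ofId, ← Polynomial.aeval_def]; exact hfA)) (AdjoinRoot.liftAlgHom _ (Algebra.ofId _ _) _ (by rw [Algebra.toRingHom_ofId, ← Polynomial.aeval_def]; exact hfB))
  have h1 : φ'.comp ψ = AlgHom.id k (A ⊗[k] B) := by
    ext : 1
    · apply AdjoinRoot.algHom_ext
      simp [ψ, φ', φ, v]
      erw [AdjoinRoot.liftAlgHom_root, Ideal.Quotient.lift_mk]
      simp [v]
    · apply AdjoinRoot.algHom_ext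
      simp [ψ, φ', φ, v]
      erw [AdjoinRoot.liftAlgHom_root, Ideal.Quotient.lift_mk]
      simp [v]
  have h2 : ψ.comp φ' = AlgHom.id k (MvPolynomial (Fin 2) k ⧸ I) := by
    apply Ideal.Quotient.algHom_ext
    apply MvPolynomial.algHom_ext
    intro i
    fin_cases i <;> simp [ψ, φ', φ, v] <;> erw [Ideal.Quotient.lift_mk] <;> simp [v] <;> erw [AdjoinRoot.liftAlgHom_root]
  let e : (MvPolynomial (Fin 2) k ⧸ I) ≃ₐ[k] A ⊗[k] B := AlgEquiv.ofAlgHom φ' ψ h1 h2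
  have hXa : (Polynomial.X ^ a : Polynomial k) ≠ 0 := pow_ne_zero _ Polynomial.X_ne_zero
  have hXb : (Polynomial.X ^ b : Polynomial k) ≠ 0 := pow_ne_zero _ Polynomial.X_ne_zero
  let pbA := AdjoinRoot.powerBasis hXa
  let pbB := AdjoinRoot.powerBasis hXb
  haveI : Module.Free k A := Module.Free.of_basis pbA.basis
  haveI : Module.Free k B := Module.Free.of_basis pbB.basis
  haveI : Module.Finite k A := Module.Finite.of_basis pbA.basis
  haveI : Module.Finite k B := Module.Finite.of_basis pbB.basis
  rw [e.toLinearEquiv.finrank_eq, Module.finrank_tensorProduct,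
    pbA.finrank, pbB.finrank]
  simp [pbA, pbB, AdjoinRoot.powerBasis]

theorem stmt_2 (k : Type*) [Field k] [CharZero k] (p q : ℕ) (hp : 2 ≤ p) (hq : 2 ≤ q)
    (I : Ideal (MvPolynomial (Fin 2) k))
    (hI : I = Ideal.span {X 0 ^ (p - 1), X 1 ^ (q - 1)}) :
    Module.finrank k (MvPolynomial (Fin 2) k ⧸ I) = (p - 1) * (q - 1) ∧
    (1 / ((1 : ℚ) / p) - 1) * (1 / ((1 : ℚ) / q) - 1) = ((p : ℚ) - 1) * ((q : ℚ) - 1) := by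
  constructor
  · subst hI
    exact milnor_aux k (p-1) (q-1) (by omega) (by omega)
  · have hp0 : (p : ℚ) ≠ 0 := Nat.cast_ne_zero.mpr (by omega)
    have hq0 : (q : ℚ) ≠ 0 := Nat.cast_ne_zero.mpr (by omega)
    field_simp
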